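/- Fix an integer ℓ ≥ 3 and a sign ε ∈ {1, -1}, and let A : ℝ² → Matrix (Fin 2) (Fin 2) ℝ be A(x₁,x₂) = !![x₁, 0; 0, x₁*x₂ + ε*x₁^ℓ]. Suppose Φ : ℝ² → ℝ² is smooth on a neighborhood of 0 with Φ(0) = 0 and fderiv ℝ Φ 0 invertible, and X : ℝ² → Matrix (Fin 2) (Fin 2) ℝ is smooth on that neighborhood with X x invertible there, such that A(Φ x) = (X x)ᵀ * A x * (X x) for all x in the neighborhood. Then det (fderiv ℝ Φ 0) > 0, i.e., Φ preserves the orientation of ℝ². -/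

import Mathlib

set_option maxHeartbeats 1000000


attribute [local instance] Matrix.normedAddCommGroup Matrix.normedSpace

open scoped Matrix

/-- For `A(x₁,x₂) = !![x₁, 0; 0, x₁x₂ + ε x₁^ℓ]` (`ℓ ≥ 3`, `ε = ±1`), any diffeomorphism-germ
`Φ` at `0` in the isotropy group `𝒟_A` (i.e. with `A ∘ Φ = Xᵀ A X` near `0` for an
invertible-matrix-valued `X`) preserves the orientation of `ℝ²`. -/
theorem isotropy_orientation_preserving_class8 (ℓ : ℕ) (hℓ : 3 ≤ ℓ)
    (ε : ℝ) (hε : ε = 1 ∨ ε = -1)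
    (A : ℝ × ℝ → Matrix (Fin 2) (Fin 2) ℝ)
    (hA : A = fun p => !![p.1, 0; 0, p.1 * p.2 + ε * p.1 ^ ℓ])
    (Φ : ℝ × ℝ → ℝ × ℝ) (X : ℝ × ℝ → Matrix (Fin 2) (Fin 2) ℝ)
    (s : Set (ℝ × ℝ)) (hs : s ∈ nhds (0 : ℝ × ℝ))
    (hΦ : ContDiffOn ℝ (⊤ : ℕ∞) Φ s) (hΦ0 : Φ 0 = 0)
    (hdΦ : IsUnit (fderiv ℝ Φ 0))
    (hX : ContDiffOn ℝ (⊤ : ℕ∞) X s) (hXinv : ∀ x ∈ s, IsUnit (X x))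
    (heq : ∀ x ∈ s, A (Φ x) = (X x)ᵀ * A x * X x) :
    0 < LinearMap.det ((fderiv ℝ Φ 0) : (ℝ × ℝ) →ₗ[ℝ] (ℝ × ℝ)) := by
  obtain ⟨m, rfl⟩ : ∃ m, ℓ = 3 + m := ⟨ℓ - 3, by omega⟩
  subst hA
  have h0s : (0:ℝ×ℝ) ∈ s := mem_of_mem_nhds hs
  have hXd : DifferentiableAt ℝ X 0 := (hX.contDiffAt hs).differentiableAt (by norm_num)
  have hΦd : DifferentiableAt ℝ Φ 0 := (hΦ.contDiffAt hs).differentiableAt (by norm_num)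
  set D := fderiv ℝ Φ 0 with hDdef
  have hD : HasFDerivAt Φ D 0 := hΦd.hasFDerivAt
  have eD : ∀ i j : Fin 2, DifferentiableAt ℝ (fun x => X x i j) 0 := fun i j =>
    ((Matrix.entryLinearMap ℝ ℝ i j).toContinuousLinearMap.differentiableAt).comp 0 hXd
  have eC : ∀ i j : Fin 2, ContinuousOn (fun x => X x i j) s := fun i j =>
    (Matrix.entryLinearMap ℝ ℝ i j).toContinuousLinearMap.continuous.comp_continuousOn
      hX.continuousOn
  set g : ℝ × ℝ → ℝ := fun p => p.2 + ε * p.1 ^ (m + 2) with hgdef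
  set h : ℝ × ℝ → ℝ := fun x => X x 0 0 ^ 2 + g x * X x 1 0 ^ 2 with hhdef
  set dX : ℝ × ℝ → ℝ := fun x => X x 0 0 * X x 1 1 - X x 0 1 * X x 1 0 with hdXdef
  have hg0 : g 0 = 0 := by simp [hgdef, zero_pow]
  have hdetX : ∀ x, (X x).det = dX x := fun x => Matrix.det_fin_two (X x)
  -- (1,1)-entry of the isotropy equation
  have P1 : ∀ x ∈ s, (Φ x).1 = x.1 * h x := by
    intro x hx
    have h00 := congrFun (congrFun (heq x hx) 0) 0
    simp [Matrix.mul_apply, Fin.sum_univ_two, Matrix.transpose_apply] at h00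
    rw [h00, hhdef, hgdef]
    ring
  -- determinant of the isotropy equation
  have P2 : ∀ x ∈ s, (Φ x).1 ^ 2 * g (Φ x) = dX x ^ 2 * (x.1 ^ 2 * g x) := by
    intro x hx
    have hdet := congrArg Matrix.det (heq x hx)
    rw [Matrix.det_mul, Matrix.det_mul, Matrix.det_transpose, hdetX] at hdet
    simp only [Matrix.det_fin_two_of] at hdet
    rw [hgdef]
    linear_combination hdet
  have key : ∀ x ∈ s, x.1 ^ 2 * (h x ^ 2 * g (Φ x)) = x.1 ^ 2 * (dX x ^ 2 * g x) := by
    intro x hx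
    have h2 := P2 x hx
    rw [P1 x hx] at h2
    linear_combination h2
  -- continuity of both sides
  have hgc : Continuous g := by rw [hgdef]; fun_prop
  have hhc : ContinuousOn h s := by
    rw [hhdef]
    exact ((eC 0 0).pow 2).add ((hgc.continuousOn).mul ((eC 1 0).pow 2))
  have hdXc : ContinuousOn dX s := by
    rw [hdXdef]
    exact ((eC 0 0).mul (eC 1 1)).sub ((eC 0 1).mul (eC 1 0))
  have hFc : ContinuousOn (fun y => h y ^ 2 * g (Φ y) - dX y ^ 2 * g y) s :=
    ((hhc.pow 2).mul (hgc.comp_continuousOn hΦ.continuousOn)).sub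
      ((hdXc.pow 2).mul hgc.continuousOn)
  have hVmem : interior s ∈ nhds (0:ℝ×ℝ) := interior_mem_nhds.2 hs
  -- divide by x₁² (by continuity across the line x₁ = 0)
  have hFeq : ∀ x ∈ interior s, h x ^ 2 * g (Φ x) = dX x ^ 2 * g x := by
    intro x hx
    rcases eq_or_ne x.1 0 with hx1 | hx1
    · have hxeq : ((0:ℝ), x.2) = x := by rw [← hx1]
      have hsx : s ∈ nhds x := mem_interior_iff_mem_nhds.1 hx
      have hca : ContinuousAt (fun y => h y ^ 2 * g (Φ y) - dX y ^ 2 * g y) x :=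
        hFc.continuousAt hsx
      have hmap0 : Filter.Tendsto (fun t : ℝ => ((t, x.2) : ℝ×ℝ)) (nhds 0) (nhds x) := by
        rw [← hxeq]
        exact (continuous_id.prodMk continuous_const).tendsto 0
      have hmap : Filter.Tendsto (fun t : ℝ => ((t, x.2) : ℝ×ℝ)) (nhdsWithin 0 {(0:ℝ)}ᶜ)
          (nhds x) := hmap0.mono_left nhdsWithin_le_nhds
      have hsm : ∀ᶠ t in nhdsWithin (0:ℝ) {(0:ℝ)}ᶜ,
          ((t, x.2) : ℝ×ℝ) ∈ s := hmap hsx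
      have hev : ∀ᶠ t in nhdsWithin (0:ℝ) {(0:ℝ)}ᶜ,
          (fun y => h y ^ 2 * g (Φ y) - dX y ^ 2 * g y) ((t, x.2) : ℝ×ℝ) = 0 := by
        filter_upwards [hsm, self_mem_nhdsWithin] with t hts ht0
        have hk := key ((t, x.2)) hts
        simp only at hk
        have ht0' : (t:ℝ) ≠ 0 := ht0
        have := mul_left_cancel₀ (pow_ne_zero 2 ht0') hk
        simpa [sub_eq_zero] using this
      have h1 : Filter.Tendsto
          (fun t : ℝ => (fun y => h y ^ 2 * g (Φ y) - dX y ^ 2 * g y) ((t, x.2) : ℝ×ℝ))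
          (nhdsWithin 0 {(0:ℝ)}ᶜ)
          (nhds (h x ^ 2 * g (Φ x) - dX x ^ 2 * g x)) := hca.tendsto.comp hmap
      have h2 : h x ^ 2 * g (Φ x) - dX x ^ 2 * g x = 0 :=
        tendsto_nhds_unique_of_eventuallyEq h1 tendsto_const_nhds hev
      linarith
    · exact mul_left_cancel₀ (pow_ne_zero 2 hx1) (key x (interior_subset hx))
  -- derivatives at 0
  have hpow1 : DifferentiableAt ℝ (fun p : ℝ×ℝ => p.1 ^ (m+1)) 0 :=
    (differentiableAt_fst).pow (m+1)
  have hpowd : HasFDerivAt (fun p : ℝ×ℝ => p.1 ^ (m+2)) (0 : (ℝ×ℝ) →L[ℝ] ℝ) 0 := by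
    have hfun : (fun p : ℝ×ℝ => p.1 ^ (m+2)) = fun p : ℝ×ℝ => p.1 * p.1 ^ (m+1) := by
      funext p; ring
    rw [hfun]
    have := (hasFDerivAt_fst (p := ((0:ℝ×ℝ)))).mul hpow1.hasFDerivAt
    simpa [zero_pow, Pi.mul_def] using this
  have hgd : HasFDerivAt g (ContinuousLinearMap.snd ℝ ℝ ℝ) (0:ℝ×ℝ) := by
    have h2 := (hasFDerivAt_snd (p := ((0:ℝ×ℝ)))).add (hpowd.const_mul ε)
    simpa [hgdef, Pi.add_def] using h2
  have hgΦd : HasFDerivAt (fun x => g (Φ x)) ((ContinuousLinearMap.snd ℝ ℝ ℝ).comp D) 0 := by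
    have hg' : HasFDerivAt g (ContinuousLinearMap.snd ℝ ℝ ℝ) (Φ 0) := by rw [hΦ0]; exact hgd
    exact hg'.comp 0 hD
  have hhd : DifferentiableAt ℝ h 0 := by
    rw [hhdef]
    exact ((eD 0 0).pow 2).add ((hgd.differentiableAt.mul ((eD 1 0).pow 2)))
  have hdXd : DifferentiableAt ℝ dX 0 := by
    rw [hdXdef]
    exact ((eD 0 0).mul (eD 1 1)).sub ((eD 0 1).mul (eD 1 0))
  have hF1d : HasFDerivAt (fun x => h x ^ 2 * g (Φ x))
      ((h 0 ^ 2) • ((ContinuousLinearMap.snd ℝ ℝ ℝ).comp D)) 0 := by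
    have := ((hhd.pow 2).hasFDerivAt).mul hgΦd
    have hsq : (fun x => h x ^ 2) 0 = h 0 ^ 2 := rfl
    simpa [hΦ0, hg0, Pi.mul_def, Pi.pow_def] using this
  have hF2d : HasFDerivAt (fun x => dX x ^ 2 * g x)
      ((dX 0 ^ 2) • ContinuousLinearMap.snd ℝ ℝ ℝ) 0 := by
    have := ((hdXd.pow 2).hasFDerivAt).mul hgd
    simpa [hg0, Pi.mul_def, Pi.pow_def] using this
  have hEE : (fun x => h x ^ 2 * g (Φ x)) =ᶠ[nhds (0:ℝ×ℝ)] (fun x => dX x ^ 2 * g x) :=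
    Filter.eventuallyEq_of_mem hVmem hFeq
  have hder : (h 0 ^ 2) • ((ContinuousLinearMap.snd ℝ ℝ ℝ).comp D)
      = (dX 0 ^ 2) • ContinuousLinearMap.snd ℝ ℝ ℝ :=
    (hF1d.congr_of_eventuallyEq hEE.symm).unique hF2d
  -- first component derivative
  have hΦ1d : HasFDerivAt (fun x => (Φ x).1) ((ContinuousLinearMap.fst ℝ ℝ ℝ).comp D) 0 :=
    (hasFDerivAt_fst (p := Φ 0)).comp 0 hD
  have hx1h : HasFDerivAt (fun x : ℝ×ℝ => x.1 * h x) ((h 0) • (ContinuousLinearMap.fst ℝ ℝ ℝ)) 0 := by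
    have := (hasFDerivAt_fst (p := ((0:ℝ×ℝ)))).mul hhd.hasFDerivAt
    simpa [Pi.mul_def] using this
  have hEE1 : (fun x => (Φ x).1) =ᶠ[nhds (0:ℝ×ℝ)] (fun x : ℝ×ℝ => x.1 * h x) :=
    Filter.eventuallyEq_of_mem hs P1
  have hder1 : (ContinuousLinearMap.fst ℝ ℝ ℝ).comp D = (h 0) • ContinuousLinearMap.fst ℝ ℝ ℝ :=
    hΦ1d.unique (hx1h.congr_of_eventuallyEq hEE1)
  -- extract matrix entries of D
  have ha : (D (1,0)).1 = h 0 := by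
    have := DFunLike.congr_fun hder1 ((1:ℝ),(0:ℝ))
    simpa using this
  have hb : (D (0,1)).1 = 0 := by
    have := DFunLike.congr_fun hder1 ((0:ℝ),(1:ℝ))
    simpa using this
  have hc2 : h 0 ^ 2 * (D (1,0)).2 = 0 := by
    have := DFunLike.congr_fun hder ((1:ℝ),(0:ℝ))
    simpa using this
  have hd2 : h 0 ^ 2 * (D (0,1)).2 = dX 0 ^ 2 := by
    have := DFunLike.congr_fun hder ((0:ℝ),(1:ℝ))
    simpa using this
  have hk : dX 0 ≠ 0 := by
    have h1 : IsUnit (X 0).det := (Matrix.isUnit_iff_isUnit_det _).1 (hXinv 0 h0s)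
    rw [hdetX] at h1
    exact h1.ne_zero
  have hh0nn : 0 ≤ h 0 := by
    have : h 0 = X 0 0 0 ^ 2 := by rw [hhdef]; simp [hg0]
    rw [this]; positivity
  have hh0ne : h 0 ≠ 0 := by
    intro hz
    rw [hz] at hd2
    simp at hd2
    exact hk (pow_eq_zero_iff (by norm_num)|>.1 hd2.symm)
  have hh0 : 0 < h 0 := lt_of_le_of_ne hh0nn (Ne.symm hh0ne)
  have hdx2 : 0 < dX 0 ^ 2 := by positivity
  have hdpos : 0 < (D (0,1)).2 := by nlinarith
  have hdet : LinearMap.det ((D : (ℝ×ℝ) →L[ℝ] ℝ×ℝ) : (ℝ×ℝ) →ₗ[ℝ] (ℝ×ℝ))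
      = (D (1,0)).1 * (D (0,1)).2 - (D (0,1)).1 * (D (1,0)).2 := by
    rw [← LinearMap.det_toMatrix (Module.Basis.finTwoProd ℝ), Matrix.det_fin_two]
    simp [LinearMap.toMatrix_apply, Module.Basis.finTwoProd_zero, Module.Basis.finTwoProd_one,
      Module.Basis.coe_finTwoProd_repr]
  rw [hdet, ha, hb]
  nlinarith
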